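/- With notation as in the abstract Kähler–Hodge setting, the inclusion of complexes (ker ∂̄, ∂†) ↪ (V, ∂†) induces a surjection on cohomology: for every x ∈ V with ∂†x = 0 there exists x' ∈ V with ∂†x' = 0, ∂̄x' = 0, and x − x' ∈ range ∂†. -/

import Mathlib

open scoped InnerProductSpace

private lemma kh_harmonic_zero {V : Type*} [NormedAddCommGroup V] [InnerProductSpace ℂ V]
    (A B : V →ₗ[ℂ] V) (hadj : ∀ x y : V, ⟪A x, y⟫_ℂ = ⟪x, B y⟫_ℂ) (h : V)
    (hh : A (B h) + B (A h) = 0) : A h = 0 ∧ B h = 0 := by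
  have h1 : ⟪h, A (B h) + B (A h)⟫_ℂ = 0 := by rw [hh]; simp
  rw [inner_add_right] at h1
  have h2 : ⟪h, B (A h)⟫_ℂ = ⟪A h, A h⟫_ℂ := (hadj h (A h)).symm
  have h3 : ⟪h, A (B h)⟫_ℂ = ⟪B h, B h⟫_ℂ := by
    have := hadj (B h) h
    calc ⟪h, A (B h)⟫_ℂ = starRingEnd ℂ ⟪A (B h), h⟫_ℂ := (inner_conj_symm _ _).symm
      _ = starRingEnd ℂ ⟪B h, B h⟫_ℂ := by rw [this]
      _ = ⟪B h, B h⟫_ℂ := inner_self_conj _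
  rw [h2, h3] at h1
  rw [inner_self_eq_norm_sq_to_K, inner_self_eq_norm_sq_to_K] at h1
  have h4 : (‖B h‖ ^ 2 + ‖A h‖ ^ 2 : ℝ) = 0 := by
    field_simp at h1
    rw [← RCLike.ofReal_pow, ← RCLike.ofReal_pow, ← RCLike.ofReal_add, RCLike.ofReal_eq_zero] at h1
    exact h1
  have hA : ‖A h‖ = 0 := by nlinarith [sq_nonneg ‖A h‖, sq_nonneg ‖B h‖, norm_nonneg (A h), norm_nonneg (B h)]
  have hB : ‖B h‖ = 0 := by nlinarith [sq_nonneg ‖A h‖, sq_nonneg ‖B h‖, norm_nonneg (A h), norm_nonneg (B h)]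
  exact ⟨norm_eq_zero.mp hA, norm_eq_zero.mp hB⟩

/-- Abstract Kähler–Hodge setting: the inclusion `(ker ∂̄, ∂†) ↪ (V, ∂†)` induces a
surjection on cohomology: every `∂†`-closed `x` is `∂†`-cohomologous to some `x'` with
`∂†x' = 0` and `∂̄x' = 0`. -/
theorem kahler_hodge_inclusion_surjective_pdag {V : Type*} [NormedAddCommGroup V]
    [InnerProductSpace ℂ V] (pd pbar pdDag pbarDag : V →ₗ[ℂ] V)
    (hpd_adj : ∀ x y : V, ⟪pd x, y⟫_ℂ = ⟪x, pdDag y⟫_ℂ)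
    (hpbar_adj : ∀ x y : V, ⟪pbar x, y⟫_ℂ = ⟪x, pbarDag y⟫_ℂ)
    (hpd2 : ∀ x : V, pd (pd x) = 0)
    (hpbar2 : ∀ x : V, pbar (pbar x) = 0)
    (hanticomm : ∀ x : V, pd (pbar x) + pbar (pd x) = 0)
    (hLaplacians : ∀ x : V,
      pbar (pbarDag x) + pbarDag (pbar x) = pd (pdDag x) + pdDag (pd x))
    (hHodge : ∀ x : V, ∃ h y : V,
      x = h + (pbar (pbarDag y) + pbarDag (pbar y)) ∧
      pbar (pbarDag h) + pbarDag (pbar h) = 0) :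
    ∀ x : V, pdDag x = 0 →
      ∃ x' : V, pdDag x' = 0 ∧ pbar x' = 0 ∧ ∃ u : V, x - x' = pdDag u := by
  -- pdDag squares to zero
  have hdag2 : ∀ z : V, pdDag (pdDag z) = 0 := by
    intro z
    have : ⟪pdDag (pdDag z), pdDag (pdDag z)⟫_ℂ = 0 := by
      rw [← hpd_adj, ← hpd_adj, hpd2]
      simp
    exact inner_self_eq_zero.mp this
  intro x hx
  obtain ⟨h, y, hxy, hharm⟩ := hHodge x
  obtain ⟨hbh, hbdh⟩ := kh_harmonic_zero pbar pbarDag hpbar_adj h hharm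
  have hharm' : pd (pdDag h) + pdDag (pd h) = 0 := by rw [← hLaplacians]; exact hharm
  obtain ⟨hph, hpdh⟩ := kh_harmonic_zero pd pdDag hpd_adj h hharm'
  refine ⟨h, hpdh, hbh, pd y, ?_⟩
  have hdiff : x - h = pd (pdDag y) + pdDag (pd y) := by
    rw [hxy, hLaplacians y]; abel
  -- pdDag (x - h) = 0
  have hd0 : pdDag (pd (pdDag y)) = 0 := by
    have : pdDag (x - h) = 0 := by rw [map_sub, hx, hpdh, sub_zero]
    rw [hdiff, map_add, hdag2 (pd y), add_zero] at this
    exact this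
  have hpp : pd (pdDag y) = 0 := by
    have : ⟪pd (pdDag y), pd (pdDag y)⟫_ℂ = 0 := by
      rw [hpd_adj, hd0]; simp
    exact inner_self_eq_zero.mp this
  rw [hdiff, hpp, zero_add]
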